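/- Let η ∈ ∧²V* with kernel K, G a complement of K, and Z ∈ ∧²G the bivector with Z♯ = −(η|_G♯)⁻¹. Then the orthogonal transformation τ_{−η} : V ⊕ V* → V ⊕ V*, (v,ξ) ↦ (v, ξ − η♯v), maps the subspace G ⊕ K* (= G ⊕ G°) onto graph(Z) = {(Z♯ξ, ξ) : ξ ∈ V*}. -/

import Mathlib

open Module

/-- with `η ∈ ∧²V*`, `K = ker η♯`, `G` a complement of `K`, and
`Z ∈ ∧²G` the bivector with `Z♯ = -(η|_G♯)⁻¹`, the orthogonal transformation
`τ_{-η} : (v,ξ) ↦ (v, ξ - η♯v)` maps `G ⊕ K* = G × G°` onto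
`graph(Z) = {(Z♯ξ, ξ) : ξ ∈ V*}`. -/
theorem tau_minus_eta_maps_G_Kstar_to_graphZ
    (V : Type*) [AddCommGroup V] [Module ℝ V] [FiniteDimensional ℝ V]
    (η : V →ₗ[ℝ] Module.Dual ℝ V) (hη : ∀ v w : V, η v w = - η w v)
    (G : Submodule ℝ V) (hG : IsCompl (LinearMap.ker η) G)
    (Z : Module.Dual ℝ V →ₗ[ℝ] V)
    (hZskew : ∀ ξ χ : Module.Dual ℝ V, ξ (Z χ) = - χ (Z ξ))
    (hZG : ∀ ξ : Module.Dual ℝ V, Z ξ ∈ G)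
    (hZann : ∀ ξ : Module.Dual ℝ V, (∀ g ∈ G, ξ g = 0) → Z ξ = 0)
    (hZη : ∀ g ∈ G, Z (η g) = -g) :
    Submodule.map
        ((LinearMap.fst ℝ V (Module.Dual ℝ V)).prod
          (LinearMap.snd ℝ V (Module.Dual ℝ V) - η ∘ₗ LinearMap.fst ℝ V (Module.Dual ℝ V)))
        (G.prod G.dualAnnihilator)
      = LinearMap.range (Z.prod LinearMap.id) := by
  ext ⟨v, ξ⟩
  simp only [Submodule.mem_map, Submodule.mem_prod, LinearMap.mem_range,
    LinearMap.prod_apply, Function.prod, LinearMap.fst_apply, LinearMap.snd_apply,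
    LinearMap.sub_apply, LinearMap.comp_apply, LinearMap.id_apply, Prod.mk.injEq,
    Prod.exists, Submodule.mem_dualAnnihilator]
  constructor
  · rintro ⟨g, χ, ⟨hg, hχ⟩, rfl, rfl⟩
    refine ⟨χ - η g, ?_, rfl⟩
    have hZχ : Z χ = 0 := hZann χ hχ
    rw [map_sub, hZχ, hZη g hg, zero_sub, neg_neg]
  · rintro ⟨χ, rfl, rfl⟩
    refine ⟨Z χ, χ + η (Z χ), ⟨hZG χ, ?_⟩, rfl, by abel⟩
    intro g hg
    have h1 : χ (Z (η g)) = - (η g) (Z χ) := hZskew χ (η g)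
    rw [hZη g hg, map_neg] at h1
    have h2 : (η (Z χ)) g = - (η g) (Z χ) := hη _ _
    simp only [LinearMap.add_apply, h2]
    linarith [h1]
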